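/- Let A = (a_ij) be the adjacency matrix of an undirected connected graph on N ≥ 2 nodes (a_ij ∈ {0,1}, a_ii = 0, a_ij = a_ji), and fix x ∈ ℝ^N. Then the system of N² linear equations in the unknowns (y_ij)_{i,j=1,…,N}: Σ_{k=1}^N a_ik (y_ij − y_kj) + a_ij (y_ij − x_j) = 0 for all i, j ∈ {1,…,N}, has the unique solution y_ij = x_j for all i, j. -/

import Mathlib

open scoped BigOperators Classical

theorem statement7 {N : ℕ} (hN : 2 ≤ N)
    (A : Fin N → Fin N → ℝ) (G : SimpleGraph (Fin N))
    (hA : ∀ i j, A i j = if G.Adj i j then (1 : ℝ) else 0)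
    (hG : G.Connected)
    (x : Fin N → ℝ) (y : Fin N × Fin N → ℝ) :
    (∀ i j, (∑ k, A i k * (y (i, j) - y (k, j))) + A i j * (y (i, j) - x j) = 0) ↔
      (∀ i j, y (i, j) = x j) := by
  constructor
  · intro h i j
    set z : Fin N → ℝ := fun i => y (i, j) - x j with hzdef
    have hsym : ∀ a b, A a b = A b a := by
      intro a b; rw [hA, hA]; simp [G.adj_comm]
    have hnn : ∀ a b, 0 ≤ A a b := by
      intro a b; rw [hA]; split <;> norm_num
    have h' : ∀ a, (∑ k, A a k * (z a - z k)) + A a j * z a = 0 := by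
      intro a
      have := h a j
      simp only [hzdef]
      convert this using 3 <;> ring
    -- the symmetrized cancelling sum
    have hS : (∑ a, ∑ k, A a k * (z a ^ 2 - z k ^ 2)) = 0 := by
      set S := ∑ a, ∑ k, A a k * (z a ^ 2 - z k ^ 2) with hSdef
      have : S = -S := by
        calc S = ∑ k, ∑ a, A a k * (z a ^ 2 - z k ^ 2) := Finset.sum_comm
        _ = ∑ a, ∑ k, -(A a k * (z a ^ 2 - z k ^ 2)) := by
            refine Finset.sum_congr rfl fun a _ => Finset.sum_congr rfl fun k _ => ?_
            rw [hsym k a]; ring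
        _ = -S := by simp [hSdef]
      linarith
    have e1 : ∑ a, 2 * z a * ((∑ k, A a k * (z a - z k)) + A a j * z a) = 0 := by
      simp [h']
    have key : (∑ a, ∑ k, A a k * (z a - z k) ^ 2) + ∑ a, 2 * (A a j * z a ^ 2) = 0 := by
      have expand : ∑ a, 2 * z a * ((∑ k, A a k * (z a - z k)) + A a j * z a)
          = ((∑ a, ∑ k, A a k * (z a - z k) ^ 2)
            + ∑ a, ∑ k, A a k * (z a ^ 2 - z k ^ 2))
            + ∑ a, 2 * (A a j * z a ^ 2) := by
        rw [← Finset.sum_add_distrib, ← Finset.sum_add_distrib]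
        refine Finset.sum_congr rfl fun a _ => ?_
        rw [mul_add, Finset.mul_sum, ← Finset.sum_add_distrib]
        have : ∑ k, (A a k * (z a - z k) ^ 2 + A a k * (z a ^ 2 - z k ^ 2))
            = ∑ k, 2 * z a * (A a k * (z a - z k)) := by
          refine Finset.sum_congr rfl fun k _ => by ring
        rw [this]; ring
      rw [expand, hS, add_zero] at e1
      exact e1
    have hT0 : (∑ a, ∑ k, A a k * (z a - z k) ^ 2) = 0 := by
      have hTnn : 0 ≤ ∑ a, ∑ k, A a k * (z a - z k) ^ 2 :=
        Finset.sum_nonneg fun a _ => Finset.sum_nonneg fun k _ =>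
          mul_nonneg (hnn a k) (sq_nonneg _)
      have hUnn : 0 ≤ ∑ a, 2 * (A a j * z a ^ 2) :=
        Finset.sum_nonneg fun a _ =>
          mul_nonneg (by norm_num) (mul_nonneg (hnn a j) (sq_nonneg _))
      linarith
    have hU0 : (∑ a, 2 * (A a j * z a ^ 2)) = 0 := by
      have hTnn : 0 ≤ ∑ a, ∑ k, A a k * (z a - z k) ^ 2 :=
        Finset.sum_nonneg fun a _ => Finset.sum_nonneg fun k _ =>
          mul_nonneg (hnn a k) (sq_nonneg _)
      linarith
    -- adjacent vertices have equal z
    have hadj : ∀ a b, G.Adj a b → z a = z b := by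
      intro a b hab
      have h1 := (Finset.sum_eq_zero_iff_of_nonneg
        (fun a _ => Finset.sum_nonneg fun k _ =>
          mul_nonneg (hnn a k) (sq_nonneg _))).mp hT0 a (Finset.mem_univ a)
      have h2 := (Finset.sum_eq_zero_iff_of_nonneg
        (fun k _ => mul_nonneg (hnn a k) (sq_nonneg _))).mp h1 b (Finset.mem_univ b)
      have hA1 : A a b = 1 := by rw [hA]; simp [hab]
      rw [hA1, one_mul] at h2
      have := sq_eq_zero_iff.mp h2
      linarith
    -- neighbors of j have z = 0
    have hnbr : ∀ a, G.Adj a j → z a = 0 := by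
      intro a haj
      have h1 := (Finset.sum_eq_zero_iff_of_nonneg
        (fun a _ => mul_nonneg (by norm_num : (0:ℝ) ≤ 2)
          (mul_nonneg (hnn a j) (sq_nonneg _)))).mp hU0 a (Finset.mem_univ a)
      have hA1 : A a j = 1 := by rw [hA]; simp [haj]
      rw [hA1, one_mul] at h1
      have h2 : z a ^ 2 = 0 := by linarith
      exact sq_eq_zero_iff.mp h2
    -- z is constant on the (connected) graph
    have hconst : ∀ a b : Fin N, z a = z b := by
      intro a b
      obtain ⟨w⟩ := hG.preconnected a b
      induction w with
      | nil => rfl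
      | cons hadj' p ih => rw [hadj _ _ hadj']; exact ih
    -- j has a neighbor
    obtain ⟨k, hk⟩ := Fintype.exists_ne_of_one_lt_card (by rw [Fintype.card_fin]; omega) j
    obtain ⟨w⟩ := hG.preconnected j k
    cases w with
    | nil => exact absurd rfl hk
    | cons hjb p =>
      have hb0 : z _ = 0 := hnbr _ hjb.symm
      have : z i = 0 := (hconst i _).trans hb0
      have : y (i, j) - x j = 0 := this
      linarith
  · intro h i j
    simp [h]
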